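/- Let a = (a_1,…,a_n) ∈ ℤ^n with Σ_{i=1}^n a_i = 0 and n ≥ 2. Then ((-1)^n/12) · Σ over partitions 𝓘 = {I_1, I_2} of [n] into two nonempty parts of (−1)·(#I_1 − 1)!·(#I_2 − 1)!·(Σ_{i∈I_1} a_i)^2, plus ((-1)^n (n-1)!)/12, equals ((-1)^{n-1} (n-1)!/24)·(Σ_{i=1}^n a_i^2 − 2). -/

import Mathlib

open Finset

lemma powsum {α : Type*} [DecidableEq α] (s : Finset α) :
    ∑ J ∈ s.powerset, (J.card.factorial * (s.card - J.card).factorial) =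
      (s.card + 1).factorial := by
  have h := Finset.sum_powerset_apply_card
    (fun k => k.factorial * (s.card - k).factorial) (x := s)
  rw [h]
  have : ∀ m ∈ range (s.card + 1),
      s.card.choose m • (m.factorial * (s.card - m).factorial) = s.card.factorial := by
    intro m hm
    rw [mem_range, Nat.lt_succ_iff] at hm
    rw [smul_eq_mul, ← mul_assoc, Nat.choose_mul_factorial_mul_factorial hm]
  rw [Finset.sum_congr rfl this, Finset.sum_const, card_range, smul_eq_mul,
    Nat.factorial_succ]

lemma Ulem {n : ℕ} (hn : 2 ≤ n) {i j : Fin n} (hij : i ≠ j) :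
    ∑ I ∈ (Finset.univ.powerset.filter
        (fun I : Finset (Fin n) => I.Nonempty ∧ I ≠ Finset.univ)).filter
        (fun I => i ∈ I ∧ j ∉ I),
      (((I.card - 1).factorial : ℚ) * ((Iᶜ.card - 1).factorial : ℚ))
      = ((n - 1).factorial : ℚ) := by
  have hs : ({i, j} : Finset (Fin n))ᶜ.card = n - 2 := by
    rw [card_compl, card_insert_of_notMem (by simpa using hij), card_singleton,
      Fintype.card_fin]
  have key : ∑ I ∈ (Finset.univ.powerset.filter
        (fun I : Finset (Fin n) => I.Nonempty ∧ I ≠ Finset.univ)).filter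
        (fun I => i ∈ I ∧ j ∉ I),
      (((I.card - 1).factorial : ℚ) * ((Iᶜ.card - 1).factorial : ℚ))
      = ∑ J ∈ ({i, j} : Finset (Fin n))ᶜ.powerset,
          ((J.card.factorial : ℚ) * ((({i, j} : Finset (Fin n))ᶜ.card - J.card).factorial : ℚ)) := by
    refine (Finset.sum_bij' (fun I _ => I.erase i) (fun J _ => insert i J) ?_ ?_ ?_ ?_ ?_).symm.symm
    · -- hi : erase insert maps into powerset
      intro I hI
      simp only [mem_filter, mem_powerset] at hI
      obtain ⟨⟨-, -, hIu⟩, hiI, hjI⟩ := hI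
      rw [mem_powerset]
      intro x hx
      rw [mem_erase] at hx
      rw [mem_compl, mem_insert, mem_singleton]
      push_neg
      exact ⟨hx.1, fun h => hjI (h ▸ hx.2)⟩
    · -- hj : insert maps into filter set
      intro J hJ
      rw [mem_powerset] at hJ
      have hiJ : i ∉ J := fun h => by simpa using hJ h
      have hjJ : j ∉ J := fun h => by simpa using hJ h
      simp only [mem_filter, mem_powerset]
      refine ⟨⟨subset_univ _, insert_nonempty _ _, ?_⟩, mem_insert_self _ _, ?_⟩
      · intro h
        have : j ∈ insert i J := h ▸ mem_univ j
        rw [mem_insert] at this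
        exact this.elim (fun h' => hij h'.symm) hjJ
      · rw [mem_insert]
        push_neg
        exact ⟨fun h => hij h.symm, hjJ⟩
    · intro I hI
      simp only [mem_filter] at hI
      exact insert_erase hI.2.1
    · intro J hJ
      rw [mem_powerset] at hJ
      have hiJ : i ∉ J := fun h => by simpa using hJ h
      exact erase_insert hiJ
    · intro I hI
      simp only [mem_filter, mem_powerset] at hI
      obtain ⟨⟨-, -, -⟩, hiI, hjI⟩ := hI
      have h1 : (I.erase i).card = I.card - 1 := card_erase_of_mem hiI
      have hc : I.card ≠ 0 := by
        simp only [ne_eq, card_eq_zero]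
        rintro rfl; simp at hiI
      have h2 : ({i, j} : Finset (Fin n))ᶜ.card - (I.card - 1) = Iᶜ.card - 1 := by
        rw [hs, card_compl, Fintype.card_fin]
        have : I.card ≤ n := by simpa [Fintype.card_fin] using card_le_univ I
        omega
      rw [h1, h2]
  rw [key]
  have h := powsum (({i, j} : Finset (Fin n))ᶜ)
  rw [hs] at h ⊢
  rw [show n - 2 + 1 = n - 1 from by omega] at h
  rw [← h]
  push_cast
  rfl
open Finset

lemma keylem (n : ℕ) (hn : 2 ≤ n) (a : Fin n → ℤ) (hsum : ∑ i, a i = 0)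
    (Ulem : ∀ {i j : Fin n}, i ≠ j →
      ∑ I ∈ (Finset.univ.powerset.filter
          (fun I : Finset (Fin n) => I.Nonempty ∧ I ≠ Finset.univ)).filter
          (fun I => i ∈ I ∧ j ∉ I),
        (((I.card - 1).factorial : ℚ) * ((Iᶜ.card - 1).factorial : ℚ))
        = ((n - 1).factorial : ℚ)) :
    ∑ I ∈ Finset.univ.powerset.filter
        (fun I : Finset (Fin n) => I.Nonempty ∧ I ≠ Finset.univ),
      ((((I.card - 1).factorial : ℚ) * ((Iᶜ.card - 1).factorial : ℚ)) *
        ((∑ i ∈ I, a i : ℤ) : ℚ) ^ 2)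
    = ((n - 1).factorial : ℚ) * ∑ i, (a i : ℚ) ^ 2 := by
  classical
  set F := Finset.univ.powerset.filter
      (fun I : Finset (Fin n) => I.Nonempty ∧ I ≠ Finset.univ) with hF
  set b : Fin n → ℚ := fun i => (a i : ℚ) with hbdef
  have hb : ∑ i, b i = 0 := by
    simp only [hbdef, ← Int.cast_sum, hsum, Int.cast_zero]
  set W : Finset (Fin n) → ℚ :=
    fun I => (((I.card - 1).factorial : ℚ) * ((Iᶜ.card - 1).factorial : ℚ)) with hW
  set c : ℚ := ((n - 1).factorial : ℚ) with hc
  have hterm : ∀ I ∈ F, W I * ((∑ i ∈ I, a i : ℤ) : ℚ) ^ 2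
      = ∑ i, ∑ j, (if i ∈ I ∧ j ∉ I then -(W I * (b i * b j)) else 0) := by
    intro I hI
    have hcompl : ∑ j ∈ Iᶜ, b j = -∑ i ∈ I, b i := by
      have h := Finset.sum_add_sum_compl I b
      rw [hb] at h
      linarith
    have hsI : ((∑ i ∈ I, a i : ℤ) : ℚ) ^ 2
        = -((∑ i ∈ I, b i) * (∑ j ∈ Iᶜ, b j)) := by
      rw [hcompl]
      push_cast
      ring
    have hdouble : ∑ i ∈ I, ∑ j ∈ Iᶜ, (W I * (b i * b j))
        = ∑ i, ∑ j, (if i ∈ I ∧ j ∉ I then W I * (b i * b j) else 0) := by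
      calc ∑ i ∈ I, ∑ j ∈ Iᶜ, (W I * (b i * b j))
          = ∑ i, (if i ∈ I then ∑ j ∈ Iᶜ, (W I * (b i * b j)) else 0) := by
            rw [Fintype.sum_ite_mem]
        _ = ∑ i, ∑ j, (if i ∈ I then (if j ∈ Iᶜ then W I * (b i * b j) else 0) else 0) := by
            refine Finset.sum_congr rfl fun i _ => ?_
            split
            · rw [Fintype.sum_ite_mem]
            · simp
        _ = _ := by
            refine Finset.sum_congr rfl fun i _ => Finset.sum_congr rfl fun j _ => ?_
            by_cases h1 : i ∈ I <;> by_cases h2 : j ∈ I <;> simp [h1, h2]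
    rw [hsI, Finset.sum_mul_sum]
    rw [show W I * -(∑ i ∈ I, ∑ j ∈ Iᶜ, b i * b j)
        = -(∑ i ∈ I, ∑ j ∈ Iᶜ, W I * (b i * b j)) by
      rw [mul_neg, Finset.mul_sum]
      congr 1
      exact Finset.sum_congr rfl fun i _ => Finset.mul_sum _ _ _]
    rw [hdouble, ← Finset.sum_neg_distrib]
    refine Finset.sum_congr rfl fun i _ => ?_
    rw [← Finset.sum_neg_distrib]
    refine Finset.sum_congr rfl fun j _ => ?_
    split <;> simp
  rw [Finset.sum_congr rfl hterm, Finset.sum_comm]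
  have hswap : ∀ i : Fin n, ∑ I ∈ F, ∑ j, (if i ∈ I ∧ j ∉ I then -(W I * (b i * b j)) else 0)
      = ∑ j, ∑ I ∈ F, (if i ∈ I ∧ j ∉ I then -(W I * (b i * b j)) else 0) :=
    fun i => Finset.sum_comm
  rw [Finset.sum_congr rfl fun i _ => hswap i]
  have hU : ∀ i j : Fin n, (∑ I ∈ F, (if i ∈ I ∧ j ∉ I then W I else 0))
      = if i = j then 0 else c := by
    intro i j
    rcases eq_or_ne i j with rfl | hij
    · simp
    · rw [if_neg hij, ← Finset.sum_filter]
      exact Ulem hij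
  have hinner : ∀ i j : Fin n,
      ∑ I ∈ F, (if i ∈ I ∧ j ∉ I then -(W I * (b i * b j)) else 0)
      = (if i = j then 0 else c) * (-(b i * b j)) := by
    intro i j
    rw [← hU i j, Finset.sum_mul]
    refine Finset.sum_congr rfl fun I _ => ?_
    split <;> ring
  rw [Finset.sum_congr rfl fun i _ => Finset.sum_congr rfl fun j _ => hinner i j]
  have hsplit : ∀ i j : Fin n, (if i = j then 0 else c) * (-(b i * b j))
      = -(c * (b i * b j)) + (if i = j then c * (b i * b j) else 0) := by
    intro i j
    split <;> ring
  rw [Finset.sum_congr rfl fun i _ => Finset.sum_congr rfl fun j _ => hsplit i j]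
  simp only [Finset.sum_add_distrib]
  have h1 : ∑ i : Fin n, ∑ j : Fin n, -(c * (b i * b j)) = 0 := by
    have : ∑ i : Fin n, ∑ j : Fin n, (b i * b j) = 0 := by
      rw [← Fintype.sum_mul_sum, hb, mul_zero]
    calc ∑ i : Fin n, ∑ j : Fin n, -(c * (b i * b j))
        = -(c * ∑ i : Fin n, ∑ j : Fin n, (b i * b j)) := by
          rw [Finset.mul_sum, ← Finset.sum_neg_distrib]
          refine Finset.sum_congr rfl fun i _ => ?_
          rw [Finset.mul_sum, ← Finset.sum_neg_distrib]
      _ = 0 := by rw [this, mul_zero, neg_zero]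
  have h2 : ∀ i : Fin n, ∑ j : Fin n, (if i = j then c * (b i * b j) else 0)
      = c * b i ^ 2 := by
    intro i
    rw [Fintype.sum_ite_eq i (fun j => c * (b i * b j))]
    ring
  rw [h1, Finset.sum_congr rfl fun i _ => h2 i]
  rw [← Finset.mul_sum]
  ring

/-- rank-one specialization of the higher-rank formula matches the closed
rank-one formula.  The sum over unordered partitions {I₁, I₂} of [n] into two nonempty
parts is formalized as half the sum over nonempty proper subsets I (taking I₁ = I,
I₂ = Iᶜ); note (Σ_{i∈I₁} aᵢ)² = (Σ_{i∈I₂} aᵢ)² since Σ aᵢ = 0. -/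
theorem rank_one_specialization
    (n : ℕ) (hn : 2 ≤ n) (a : Fin n → ℤ) (hsum : ∑ i, a i = 0) :
    ((-1 : ℚ) ^ n / 12) *
        ((1 : ℚ) / 2 *
          ∑ I ∈ Finset.univ.powerset.filter
              (fun I : Finset (Fin n) => I.Nonempty ∧ I ≠ Finset.univ),
            (-1 : ℚ) * (I.card - 1).factorial * (Iᶜ.card - 1).factorial *
              ((∑ i ∈ I, a i : ℤ) : ℚ) ^ 2)
      + ((-1 : ℚ) ^ n * (n - 1).factorial) / 12
      = ((-1 : ℚ) ^ (n - 1) * (n - 1).factorial / 24) * ((∑ i, (a i : ℚ) ^ 2) - 2) := by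
  have hkey := keylem n hn a hsum (fun {i j} hij => Ulem hn hij)
  have hS : (∑ I ∈ Finset.univ.powerset.filter
        (fun I : Finset (Fin n) => I.Nonempty ∧ I ≠ Finset.univ),
      (-1 : ℚ) * (I.card - 1).factorial * (Iᶜ.card - 1).factorial *
        ((∑ i ∈ I, a i : ℤ) : ℚ) ^ 2)
      = -(((n - 1).factorial : ℚ) * ∑ i, (a i : ℚ) ^ 2) := by
    rw [← hkey, ← Finset.sum_neg_distrib]
    exact Finset.sum_congr rfl fun I _ => by ring
  rw [hS]
  rw [show ((-1 : ℚ) ^ n) = (-1) ^ (n - 1) * (-1) by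
    rw [← pow_succ]; congr 1; omega]
  ring
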